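/- Fix X = 3/2, k_1 = 8, k_2 = 1, ξ = 1, k_7 = 8, β = 11/936, k_4 = 16384/819, and regard δ and k_3 as variables, so that F_1, F_2 and the trace and determinant of the Jacobian J of (F_1, F_2) in (x_1, x_2) become smooth functions of (x_1, x_2, δ, k_3). Then the map T(x_1, x_2, δ, k_3) = (F_1, F_2, tr J, det J) has invertible (Fréchet) derivative at the point (1, 1/4, 1/6, 324/7); its Jacobian determinant there equals −6 k_3^2 − (27/4) W k_3 with k_3 = 324/7 and W = 256 β k_4/(8β+1)^3, which is negative. -/

import Mathlib

/-- Right-hand side `F₁` of the reduced two-dimensional model for wild-type Lck. -/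
noncomputable def F1 (k1 k2 k3 k4 k7 β δ ξ X : ℝ) (x1 x2 : ℝ) : ℝ :=
  -(k2 * x1) + k1 * x2 + k4 * ξ * (X - x1 - x2) / (β * (ξ + 1) + ξ * (X - x1 - x2))
    - k3 * x1 * ((X - x1 - x2) + δ * x1)

/-- Right-hand side `F₂` of the reduced two-dimensional model for wild-type Lck. -/
noncomputable def F2 (k1 k2 k3 k4 k7 β δ ξ X : ℝ) (x1 x2 : ℝ) : ℝ :=
  k2 * x1 - k1 * x2 + (k7 / (ξ + 1)) * (X - x1 - x2)

/-- Jacobian matrix of `(F₁, F₂)` with respect to `(x₁, x₂)`, formed from the four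
partial derivatives. -/
noncomputable def Jac (k1 k2 k3 k4 k7 β δ ξ X : ℝ) (x1 x2 : ℝ) : Matrix (Fin 2) (Fin 2) ℝ :=
  !![deriv (fun s => F1 k1 k2 k3 k4 k7 β δ ξ X s x2) x1,
     deriv (fun s => F1 k1 k2 k3 k4 k7 β δ ξ X x1 s) x2;
     deriv (fun s => F2 k1 k2 k3 k4 k7 β δ ξ X s x2) x1,
     deriv (fun s => F2 k1 k2 k3 k4 k7 β δ ξ X x1 s) x2]

/-- The map `T(x₁, x₂, δ, k₃) = (F₁, F₂, tr J, det J)`, with the remaining parameters fixed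
at `X = 3/2`, `k₁ = 8`, `k₂ = 1`, `ξ = 1`, `k₇ = 8`, `β = 11/936`, `k₄ = 16384/819`. -/
noncomputable def Tmap (p : ℝ × ℝ × ℝ × ℝ) : ℝ × ℝ × ℝ × ℝ :=
  (F1 8 1 p.2.2.2 (16384/819) 8 (11/936) p.2.2.1 1 (3/2) p.1 p.2.1,
   F2 8 1 p.2.2.2 (16384/819) 8 (11/936) p.2.2.1 1 (3/2) p.1 p.2.1,
   Matrix.trace (Jac 8 1 p.2.2.2 (16384/819) 8 (11/936) p.2.2.1 1 (3/2) p.1 p.2.1),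
   (Jac 8 1 p.2.2.2 (16384/819) 8 (11/936) p.2.2.1 1 (3/2) p.1 p.2.1).det)

/-- value of `∂F₁/∂x₁`. -/
noncomputable def Aval (p : ℝ × ℝ × ℝ × ℝ) : ℝ :=
  -1 - (11/468*(16384/819)) * (((11:ℝ)/468 + (3/2 - p.1 - p.2.1))⁻¹ * ((11:ℝ)/468 + (3/2 - p.1 - p.2.1))⁻¹)
    - p.2.2.2*((3/2 - p.1 - p.2.1) + p.2.2.1*p.1) - p.2.2.2*p.1*(p.2.2.1 - 1)

/-- value of `∂F₁/∂x₂`. -/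
noncomputable def Bval (p : ℝ × ℝ × ℝ × ℝ) : ℝ :=
  8 - (11/468*(16384/819)) * (((11:ℝ)/468 + (3/2 - p.1 - p.2.1))⁻¹ * ((11:ℝ)/468 + (3/2 - p.1 - p.2.1))⁻¹)
    + p.2.2.2*p.1

/-- explicit form of `Tmap` away from the singular set. -/
noncomputable def G (p : ℝ × ℝ × ℝ × ℝ) : ℝ × ℝ × ℝ × ℝ :=
  (-p.1 + 8*p.2.1 + (16384/819) * (3/2 - p.1 - p.2.1) * ((11:ℝ)/468 + (3/2 - p.1 - p.2.1))⁻¹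
      - p.2.2.2*p.1*((3/2 - p.1 - p.2.1) + p.2.2.1*p.1),
   p.1 - 8*p.2.1 + 4*(3/2 - p.1 - p.2.1),
   Aval p + (-12),
   Aval p * (-12) - Bval p * (-3))

lemma derivF1x1 (x1 x2 δ k3 : ℝ) (h : (11:ℝ)/468 + (3/2 - x1 - x2) ≠ 0) :
    deriv (fun s => F1 8 1 k3 (16384/819) 8 (11/936) δ 1 (3/2) s x2) x1
    = -1 - (11/468*(16384/819)) * (((11:ℝ)/468 + (3/2 - x1 - x2))⁻¹ * ((11:ℝ)/468 + (3/2 - x1 - x2))⁻¹)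
        - k3*((3/2 - x1 - x2) + δ*x1) - k3*x1*(δ - 1) := by
  have e : (11:ℝ)/936*(1+1) + 1*(3/2 - x1 - x2) = 11/468 + (3/2 - x1 - x2) := by ring
  have h' : (11:ℝ)/936*(1+1) + 1*(3/2 - x1 - x2) ≠ 0 := by rw [e]; exact h
  have hs : HasDerivAt (fun s : ℝ => s) 1 x1 := hasDerivAt_id x1
  have hu : HasDerivAt (fun s : ℝ => 3/2 - s - x2) (-1) x1 :=
    (hs.const_sub (3/2)).sub_const x2
  have hden : HasDerivAt (fun s : ℝ => (11:ℝ)/936*(1+1) + 1*(3/2 - s - x2)) (1*(-1)) x1 :=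
    (hu.const_mul 1).const_add _
  have hnum : HasDerivAt (fun s : ℝ => (16384:ℝ)/819*1*(3/2 - s - x2)) ((16384:ℝ)/819*1*(-1)) x1 :=
    hu.const_mul _
  have hfrac := hnum.div hden h'
  have hlast : HasDerivAt (fun s : ℝ => k3*s*((3/2 - s - x2) + δ*s))
      ((k3*1) * ((3/2 - x1 - x2) + δ*x1) + (k3*x1) * ((-1) + δ*1)) x1 :=
    (hs.const_mul k3).mul (hu.add (hs.const_mul δ))
  have H := (((hs.const_mul 1).neg.add_const (8*x2)).add hfrac).sub hlast
  simp only [F1]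
  refine H.deriv.trans ?_
  rw [e]
  set u : ℝ := 3/2 - x1 - x2 with hu'
  set D : ℝ := 11/468 + u with hD
  field_simp
  rw [hD]
  ring

lemma derivF1x2 (x1 x2 δ k3 : ℝ) (h : (11:ℝ)/468 + (3/2 - x1 - x2) ≠ 0) :
    deriv (fun s => F1 8 1 k3 (16384/819) 8 (11/936) δ 1 (3/2) x1 s) x2
    = 8 - (11/468*(16384/819)) * (((11:ℝ)/468 + (3/2 - x1 - x2))⁻¹ * ((11:ℝ)/468 + (3/2 - x1 - x2))⁻¹)
        + k3*x1 := by
  have e : (11:ℝ)/936*(1+1) + 1*(3/2 - x1 - x2) = 11/468 + (3/2 - x1 - x2) := by ring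
  have h' : (11:ℝ)/936*(1+1) + 1*(3/2 - x1 - x2) ≠ 0 := by rw [e]; exact h
  have hs : HasDerivAt (fun s : ℝ => s) 1 x2 := hasDerivAt_id x2
  have hu : HasDerivAt (fun s : ℝ => 3/2 - x1 - s) (-1) x2 := hs.const_sub (3/2 - x1)
  have hden : HasDerivAt (fun s : ℝ => (11:ℝ)/936*(1+1) + 1*(3/2 - x1 - s)) (1*(-1)) x2 :=
    (hu.const_mul 1).const_add _
  have hnum : HasDerivAt (fun s : ℝ => (16384:ℝ)/819*1*(3/2 - x1 - s)) ((16384:ℝ)/819*1*(-1)) x2 :=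
    hu.const_mul _
  have hfrac := hnum.div hden h'
  have hlast : HasDerivAt (fun s : ℝ => k3*x1*((3/2 - x1 - s) + δ*x1)) ((k3*x1) * (-1)) x2 := by
    simpa using (hu.add_const (δ*x1)).const_mul (k3*x1)
  have H := (((hs.const_mul 8).const_add (-(1*x1))).add hfrac).sub hlast
  simp only [F1]
  refine H.deriv.trans ?_
  rw [e]
  set u : ℝ := 3/2 - x1 - x2 with hu'
  set D : ℝ := 11/468 + u with hD
  field_simp
  rw [hD]
  ring

lemma derivF2x1 (x1 x2 δ k3 : ℝ) :
    deriv (fun s => F2 8 1 k3 (16384/819) 8 (11/936) δ 1 (3/2) s x2) x1 = -3 := by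
  have hs : HasDerivAt (fun s : ℝ => s) 1 x1 := hasDerivAt_id x1
  have hu : HasDerivAt (fun s : ℝ => 3/2 - s - x2) (-1) x1 :=
    (hs.const_sub (3/2)).sub_const x2
  have H := (((hs.const_mul 1).sub_const (8*x2)).add (hu.const_mul ((8:ℝ)/(1+1))))
  simp only [F2]
  refine H.deriv.trans ?_
  norm_num

lemma derivF2x2 (x1 x2 δ k3 : ℝ) :
    deriv (fun s => F2 8 1 k3 (16384/819) 8 (11/936) δ 1 (3/2) x1 s) x2 = -12 := by
  have hs : HasDerivAt (fun s : ℝ => s) 1 x2 := hasDerivAt_id x2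
  have hu : HasDerivAt (fun s : ℝ => 3/2 - x1 - s) (-1) x2 := hs.const_sub (3/2 - x1)
  have H := (((hs.const_mul 8).const_sub (1*x1)).add (hu.const_mul ((8:ℝ)/(1+1))))
  simp only [F2]
  refine H.deriv.trans ?_
  norm_num

lemma Tmap_eq (p : ℝ × ℝ × ℝ × ℝ) (h : (11:ℝ)/468 + (3/2 - p.1 - p.2.1) ≠ 0) :
    Tmap p = G p := by
  obtain ⟨x1, x2, δ, k3⟩ := p
  simp only at h
  have e : (11:ℝ)/936*(1+1) + 1*(3/2 - x1 - x2) = 11/468 + (3/2 - x1 - x2) := by ring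
  have h' : (11:ℝ)/936*(1+1) + 1*(3/2 - x1 - x2) ≠ 0 := by rw [e]; exact h
  simp only [Tmap, Jac, G, Aval, Bval, Matrix.trace_fin_two_of, Matrix.det_fin_two_of]
  rw [derivF1x1 _ _ _ _ h, derivF1x2 _ _ _ _ h, derivF2x1 x1 x2 δ k3, derivF2x2 x1 x2 δ k3]
  refine Prod.ext ?_ (Prod.ext ?_ rfl)
  · simp only [F1]
    rw [e, div_eq_mul_inv]
    ring
  · simp only [F2]
    norm_num

open ContinuousLinearMap in
/-- row functional -/
noncomputable def row (c1 c2 c3 c4 : ℝ) : (ℝ×ℝ×ℝ×ℝ) →L[ℝ] ℝ :=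
  c1 • (fst ℝ ℝ (ℝ×ℝ×ℝ)) +
  c2 • ((fst ℝ ℝ (ℝ×ℝ)).comp (snd ℝ ℝ (ℝ×ℝ×ℝ))) +
  c3 • ((fst ℝ ℝ ℝ).comp ((snd ℝ ℝ (ℝ×ℝ)).comp (snd ℝ ℝ (ℝ×ℝ×ℝ)))) +
  c4 • ((snd ℝ ℝ ℝ).comp ((snd ℝ ℝ (ℝ×ℝ)).comp (snd ℝ ℝ (ℝ×ℝ×ℝ))))

@[simp] lemma row_apply (c1 c2 c3 c4 : ℝ) (p : ℝ×ℝ×ℝ×ℝ) :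
    row c1 c2 c3 c4 p = c1 * p.1 + c2 * p.2.1 + c3 * p.2.2.1 + c4 * p.2.2.2 := by
  simp [row]

/-- the candidate derivative -/
noncomputable def Lc : (ℝ×ℝ×ℝ×ℝ) →L[ℝ] (ℝ×ℝ×ℝ×ℝ) :=
  (row 12 48 (-324/7) (-5/12)).prod ((row (-3) (-12) 0 0).prod
    ((row (873/28) (9/28) (-648/7) (5/12)).prod (row (-10449/28) (-3969/28) (7776/7) (-2))))

noncomputable def eqvE : (ℝ×ℝ×ℝ×ℝ) ≃ₗ[ℝ] (Fin 4 → ℝ) :=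
  LinearEquiv.ofLinear
    (LinearMap.pi ![LinearMap.fst ℝ ℝ (ℝ×ℝ×ℝ),
                    (LinearMap.fst ℝ ℝ (ℝ×ℝ)).comp (LinearMap.snd ℝ ℝ (ℝ×ℝ×ℝ)),
                    (LinearMap.fst ℝ ℝ ℝ).comp ((LinearMap.snd ℝ ℝ (ℝ×ℝ)).comp (LinearMap.snd ℝ ℝ (ℝ×ℝ×ℝ))),
                    (LinearMap.snd ℝ ℝ ℝ).comp ((LinearMap.snd ℝ ℝ (ℝ×ℝ)).comp (LinearMap.snd ℝ ℝ (ℝ×ℝ×ℝ)))])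
    ((LinearMap.proj 0).prod ((LinearMap.proj 1).prod ((LinearMap.proj 2).prod (LinearMap.proj 3))))
    (by
      apply LinearMap.ext; intro x; funext i
      fin_cases i <;> simp [LinearMap.pi_apply])
    (by
      apply LinearMap.ext; intro x
      simp [LinearMap.pi_apply])

lemma det_Lc : LinearMap.det (Lc : (ℝ×ℝ×ℝ×ℝ) →ₗ[ℝ] (ℝ×ℝ×ℝ×ℝ)) = -5334093/196 := by
  rw [← LinearMap.det_conj (Lc : (ℝ×ℝ×ℝ×ℝ) →ₗ[ℝ] (ℝ×ℝ×ℝ×ℝ)) eqvE]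
  rw [← LinearMap.det_toMatrix' ]
  have : LinearMap.toMatrix'
      ((eqvE : (ℝ×ℝ×ℝ×ℝ) →ₗ[ℝ] (Fin 4 → ℝ)) ∘ₗ (Lc : (ℝ×ℝ×ℝ×ℝ) →ₗ[ℝ] (ℝ×ℝ×ℝ×ℝ)) ∘ₗ (eqvE.symm : (Fin 4 → ℝ) →ₗ[ℝ] (ℝ×ℝ×ℝ×ℝ)))
      = !![12, 48, -324/7, -5/12; -3, -12, 0, 0; 873/28, 9/28, -648/7, 5/12;
           -10449/28, -3969/28, 7776/7, -2] := by
    ext i j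
    fin_cases i <;> fin_cases j <;>
      simp [LinearMap.toMatrix'_apply, eqvE, Lc, LinearMap.pi_apply] <;> norm_num
  rw [this]
  simp [Matrix.det_succ_row_zero, Fin.sum_univ_succ, Fin.succAbove]
  norm_num

set_option maxHeartbeats 2000000 in
/-- **Condition BT.3.** The map `T : (x₁, x₂, δ, k₃) ↦ (F₁, F₂, tr J, det J)` has invertible
derivative at the Bogdanov–Takens point `(1, 1/4, 1/6, 324/7)`; its Jacobian determinant
there equals `−6 k₃² − (27/4) W k₃` with `k₃ = 324/7` and `W = 256 β k₄/(8β+1)³`, which is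
negative. -/
theorem lck_BT3 :
    ∃ L : (ℝ × ℝ × ℝ × ℝ) →L[ℝ] (ℝ × ℝ × ℝ × ℝ),
      HasFDerivAt Tmap L (1, 1/4, 1/6, 324/7) ∧
      LinearMap.det (L : (ℝ × ℝ × ℝ × ℝ) →ₗ[ℝ] (ℝ × ℝ × ℝ × ℝ))
        = -6 * (324/7 : ℝ) ^ 2
          - (27/4) * (256 * (11/936) * (16384/819) / (8 * (11/936) + 1) ^ 3) * (324/7) ∧
      (-6 * (324/7 : ℝ) ^ 2
          - (27/4) * (256 * (11/936) * (16384/819) / (8 * (11/936) + 1) ^ 3) * (324/7) < 0) ∧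
      Function.Bijective L := by
  refine ⟨Lc, ?_, ?_, by norm_num, ?_⟩
  · set p₀ : ℝ×ℝ×ℝ×ℝ := ((1:ℝ), (1/4:ℝ), (1/6:ℝ), (324/7:ℝ)) with hp₀def
    have h1 : HasFDerivAt (fun p : ℝ×ℝ×ℝ×ℝ => p.1)
        (ContinuousLinearMap.fst ℝ ℝ (ℝ×ℝ×ℝ)) p₀ := hasFDerivAt_fst
    have h2 : HasFDerivAt (fun p : ℝ×ℝ×ℝ×ℝ => p.2.1)
        ((ContinuousLinearMap.fst ℝ ℝ (ℝ×ℝ)).comp (ContinuousLinearMap.snd ℝ ℝ (ℝ×ℝ×ℝ))) p₀ :=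
      hasFDerivAt_fst.comp p₀ hasFDerivAt_snd
    have h3 : HasFDerivAt (fun p : ℝ×ℝ×ℝ×ℝ => p.2.2.1)
        ((ContinuousLinearMap.fst ℝ ℝ ℝ).comp ((ContinuousLinearMap.snd ℝ ℝ (ℝ×ℝ)).comp
          (ContinuousLinearMap.snd ℝ ℝ (ℝ×ℝ×ℝ)))) p₀ := by
      exact hasFDerivAt_fst.comp p₀ ((hasFDerivAt_snd).comp p₀ hasFDerivAt_snd)
    have h4 : HasFDerivAt (fun p : ℝ×ℝ×ℝ×ℝ => p.2.2.2)
        ((ContinuousLinearMap.snd ℝ ℝ ℝ).comp ((ContinuousLinearMap.snd ℝ ℝ (ℝ×ℝ)).comp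
          (ContinuousLinearMap.snd ℝ ℝ (ℝ×ℝ×ℝ)))) p₀ := by
      exact hasFDerivAt_snd.comp p₀ ((hasFDerivAt_snd).comp p₀ hasFDerivAt_snd)
    have hu : HasFDerivAt (fun p : ℝ×ℝ×ℝ×ℝ => 3/2 - p.1 - p.2.1) _ p₀ :=
      (h1.const_sub (3/2)).sub h2
    have hD : HasFDerivAt (fun p : ℝ×ℝ×ℝ×ℝ => (11:ℝ)/468 + (3/2 - p.1 - p.2.1)) _ p₀ :=
      hu.const_add ((11:ℝ)/468)
    have hD0 : ((fun p : ℝ×ℝ×ℝ×ℝ => (11:ℝ)/468 + (3/2 - p.1 - p.2.1)) p₀) ≠ 0 := by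
      simp [hp₀def]; norm_num
    have hinv : HasFDerivAt
        (fun p : ℝ×ℝ×ℝ×ℝ => ((11:ℝ)/468 + (3/2 - p.1 - p.2.1))⁻¹) _ p₀ :=
      (hasFDerivAt_inv hD0).comp p₀ hD
    have hG1 := (((h1.neg).add (h2.const_mul 8)).add
        ((hu.const_mul ((16384:ℝ)/819)).mul hinv)).sub ((h4.mul h1).mul (hu.add (h3.mul h1)))
    have hG2 := (h1.sub (h2.const_mul 8)).add (hu.const_mul 4)
    have hW := (hinv.mul hinv).const_mul ((11:ℝ)/468*(16384/819))
    have hA := (((hasFDerivAt_const (-1:ℝ) p₀).sub hW).sub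
        (h4.mul (hu.add (h3.mul h1)))).sub ((h4.mul h1).mul (h3.sub_const 1))
    have hB := ((hasFDerivAt_const (8:ℝ) p₀).sub hW).add (h4.mul h1)
    have hG3 := hA.add_const (-12:ℝ)
    have hG4 := (hA.mul_const (-12:ℝ)).sub (hB.mul_const (-3:ℝ))
    have hbig := HasFDerivAt.prodMk hG1 (HasFDerivAt.prodMk hG2 (HasFDerivAt.prodMk hG3 hG4))
    have hGL : HasFDerivAt G Lc p₀ := by
      unfold G Aval Bval
      refine HasFDerivAt.congr_fderiv hbig ?_
      refine ContinuousLinearMap.ext fun v => ?_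
      refine Prod.ext ?_ (Prod.ext ?_ (Prod.ext ?_ ?_)) <;>
        · simp only [Lc, hp₀def, ContinuousLinearMap.prod_apply, ContinuousLinearMap.add_apply,
            ContinuousLinearMap.sub_apply, ContinuousLinearMap.neg_apply,
            ContinuousLinearMap.coe_smul', ContinuousLinearMap.coe_comp', Function.comp_apply,
            ContinuousLinearMap.coe_fst', ContinuousLinearMap.coe_snd',
            ContinuousLinearMap.smulRight_apply, ContinuousLinearMap.one_apply,
            Pi.smul_apply, smul_eq_mul, row_apply]
          norm_num
          try ring_nf
          try norm_num
    have hev : Tmap =ᶠ[nhds p₀] G := by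
      have hcont : Continuous fun p : ℝ×ℝ×ℝ×ℝ => (11:ℝ)/468 + (3/2 - p.1 - p.2.1) := by
        fun_prop
      have hopen : IsOpen {p : ℝ×ℝ×ℝ×ℝ | (11:ℝ)/468 + (3/2 - p.1 - p.2.1) ≠ 0} :=
        IsOpen.preimage hcont isOpen_ne
      refine Filter.eventuallyEq_of_mem (hopen.mem_nhds ?_) (fun p hp => Tmap_eq p hp)
      simp [hp₀def]; norm_num
    exact hGL.congr_of_eventuallyEq hev
  · rw [det_Lc]; norm_num
  · have hne : LinearMap.det (Lc : (ℝ×ℝ×ℝ×ℝ) →ₗ[ℝ] (ℝ×ℝ×ℝ×ℝ)) ≠ 0 := by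
      rw [det_Lc]; norm_num
    exact (LinearMap.equivOfDetNeZero _ hne).bijective
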